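/- Let k be a commutative ring and S a finite right restriction E-Ehresmann semigroup. Let A be the free k-module with basis S, equipped with two bilinear multiplications: the semigroup (convolution) product, extending s·t = st bilinearly, and the category product ⋆, extending s ⋆ t = st if s* = t⁺ and s ⋆ t = 0 otherwise. Then the k-linear map φ : A → A defined on basis elements by φ(s) = Σ_{t ≤ₗ s} t (sum over all t ∈ S with t ≤ₗ s) is bijective and satisfies φ(s·t) = φ(s) ⋆ φ(t) for all s, t ∈ S; hence (A, ·) and (A, ⋆) are isomorphic as (not necessarily unital) k-algebras. -/

import Mathlib

def LtRel {S : Type*} [Semigroup S] (E : Set S) (a b : S) : Prop :=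
  ∀ e ∈ E, (a * e = a ↔ b * e = b)

def RtRel {S : Type*} [Semigroup S] (E : Set S) (a b : S) : Prop :=
  ∀ e ∈ E, (e * a = a ↔ e * b = b)

def HtRel {S : Type*} [Semigroup S] (E : Set S) (a b : S) : Prop :=
  LtRel E a b ∧ RtRel E a b

/-- An `E`-Ehresmann structure on a semigroup `S`: `E` is a subsemilattice
(commutative set of idempotents closed under multiplication), every `Lt`-class
and every `Rt`-class contains exactly one element of `E` (denoted `star a` and
`plus a` respectively), `Lt` is a right congruence and `Rt` is a left congruence
(expressed by the identities `(ab)* = (a*b)*` and `(ab)⁺ = (ab⁺)⁺`). -/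
structure Ehresmann (S : Type*) [Semigroup S] (E : Set S) where
  star : S → S
  plus : S → S
  idem : ∀ e ∈ E, e * e = e
  comm : ∀ e ∈ E, ∀ f ∈ E, e * f = f * e
  mul_mem : ∀ e ∈ E, ∀ f ∈ E, e * f ∈ E
  star_mem : ∀ a : S, star a ∈ E
  star_lt : ∀ a : S, LtRel E a (star a)
  star_unique : ∀ a : S, ∀ f ∈ E, LtRel E a f → f = star a
  plus_mem : ∀ a : S, plus a ∈ E
  plus_rt : ∀ a : S, RtRel E a (plus a)
  plus_unique : ∀ a : S, ∀ f ∈ E, RtRel E a f → f = plus a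
  star_congr : ∀ a b : S, star (a * b) = star (star a * b)
  plus_congr : ∀ a b : S, plus (a * b) = plus (a * plus b)

def RightRestriction {S : Type*} [Semigroup S] {E : Set S} (M : Ehresmann S E) : Prop :=
  ∀ e ∈ E, ∀ a : S, e * a = a * M.star (e * a)

def LeftRestriction {S : Type*} [Semigroup S] {E : Set S} (M : Ehresmann S E) : Prop :=
  ∀ e ∈ E, ∀ a : S, a * e = M.plus (a * e) * a

/-- A subset `G` of a semigroup is a group under the semigroup multiplication. -/
def IsGroupSubset {S : Type*} [Semigroup S] (G : Set S) : Prop :=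
  (∀ a ∈ G, ∀ b ∈ G, a * b ∈ G) ∧
  ∃ u ∈ G, (∀ a ∈ G, u * a = a ∧ a * u = a) ∧
    (∀ a ∈ G, ∃ b ∈ G, a * b = u ∧ b * a = u)

/-- `S` is EI-Ehresmann (w.r.t. `E`) when every `Ht`-class of a projection is a group. -/
def EIEhresmann {S : Type*} [Semigroup S] (E : Set S) : Prop :=
  ∀ e ∈ E, IsGroupSubset {a : S | HtRel E a e}

def SandwichSet {S : Type*} [Semigroup S] (f₁ f₂ : S) : Set S :=
  {h : S | h * h = h ∧ f₂ * h * f₁ = h ∧ f₁ * h * f₂ = f₁ * f₂}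

def GreenR {S : Type*} [Semigroup S] (a b : S) : Prop :=
  insert a {x : S | ∃ s, a * s = x} = insert b {x : S | ∃ s, b * s = x}

def GreenL {S : Type*} [Semigroup S] (a b : S) : Prop :=
  insert a {x : S | ∃ s, s * a = x} = insert b {x : S | ∃ s, s * b = x}

def GreenJ {S : Type*} [Semigroup S] (a b : S) : Prop :=
  insert a ({x : S | ∃ s, a * s = x} ∪ {x : S | ∃ s, s * a = x} ∪
      {x : S | ∃ s t, s * a * t = x}) =
  insert b ({x : S | ∃ s, b * s = x} ∪ {x : S | ∃ s, s * b = x} ∪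
      {x : S | ∃ s t, s * b * t = x})

/-- The semigroup (convolution) product on the free `k`-module with basis `S`. -/
noncomputable def convMul {S : Type*} [Semigroup S] {k : Type*} [CommRing k]
    (x y : S →₀ k) : S →₀ k :=
  x.sum fun s a => y.sum fun t b => Finsupp.single (s * t) (a * b)

/-- The product of the associated Ehresmann category, carried by the free `k`-module
with basis `S`: on basis elements, `s ⋆ t = s t` if `s* = t⁺` and `0` otherwise. -/
noncomputable def catMul {S : Type*} [Semigroup S] [DecidableEq S] {E : Set S}
    (M : Ehresmann S E) {k : Type*} [CommRing k] (x y : S →₀ k) : S →₀ k :=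
  x.sum fun s a => y.sum fun t b =>
    if M.star s = M.plus t then Finsupp.single (s * t) (a * b) else 0

/-- The linear map `φ` defined on basis elements by `φ(s) = Σ_{t ≤ₗ s} t`, where
`t ≤ₗ s` means `t = s t*`. -/
noncomputable def phiMap {S : Type*} [Semigroup S] [Fintype S] [DecidableEq S]
    {E : Set S} (M : Ehresmann S E) {k : Type*} [CommRing k] (x : S →₀ k) : S →₀ k :=
  x.sum fun s a =>
    ∑ t ∈ Finset.univ.filter (fun t : S => t = s * M.star t), Finsupp.single t a


namespace Stmt18Aux

section SemigroupLemmas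

variable {S : Type*} [Semigroup S] {E : Set S} (M : Ehresmann S E)

lemma mul_star (a : S) : a * M.star a = a :=
  (M.star_lt a (M.star a) (M.star_mem a)).mpr (M.idem _ (M.star_mem a))

lemma plus_mul (a : S) : M.plus a * a = a :=
  (M.plus_rt a (M.plus a) (M.plus_mem a)).mpr (M.idem _ (M.plus_mem a))

lemma star_of_mem {e : S} (he : e ∈ E) : M.star e = e :=
  (M.star_unique e e he (fun _ _ => Iff.rfl)).symm

lemma plus_of_mem {e : S} (he : e ∈ E) : M.plus e = e :=
  (M.plus_unique e e he (fun _ _ => Iff.rfl)).symm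

lemma star_mul_star (a : S) {f : S} (hf : f ∈ E) : M.star (a * f) = M.star a * f := by
  rw [M.star_congr]
  exact star_of_mem M (M.mul_mem _ (M.star_mem a) _ hf)

lemma star_absorb {x y : S} (h : x = y * M.star x) : M.star x = M.star y * M.star x := by
  conv_lhs => rw [h]
  exact star_mul_star M y (M.star_mem x)

/-- transitivity of the left order -/
lemma leL_trans {x y z : S} (hxy : x = y * M.star x) (hyz : y = z * M.star y) :
    x = z * M.star x := by
  have h1 : M.star x = M.star y * M.star x := star_absorb M hxy
  calc x = y * M.star x := hxy
    _ = (z * M.star y) * M.star x := by rw [← hyz]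
    _ = z * (M.star y * M.star x) := mul_assoc _ _ _
    _ = z * M.star x := by rw [← h1]

lemma leL_antisymm {x y : S} (hxy : x = y * M.star x) (hyx : y = x * M.star y) :
    x = y := by
  have h1 : M.star x = M.star y * M.star x := star_absorb M hxy
  have h2 : M.star y = M.star x * M.star y := star_absorb M hyx
  have h3 : M.star x = M.star y := by
    rw [h1, M.comm _ (M.star_mem y) _ (M.star_mem x), ← h2]
  rw [hxy, h3, mul_star]

section KeyBijection

lemma star_mul_eq_star {a b : S} (hab : M.star a = M.plus b) :
    M.star (a * b) = M.star b := by
  rw [M.star_congr, hab, plus_mul]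

lemma key_forward {s t a b : S} (ha : a = s * M.star a) (hb : b = t * M.star b)
    (hab : M.star a = M.plus b) : a * b = (s * t) * M.star (a * b) := by
  have h1 : M.star (a * b) = M.star b := star_mul_eq_star M hab
  have h2 : a * b = s * b := by
    conv_lhs => rw [ha]
    rw [mul_assoc, hab, plus_mul]
  rw [h1, h2]
  conv_lhs => rw [hb]
  rw [mul_assoc]

lemma key_backward_b {s t x : S} (_hx : x = (s * t) * M.star x) :
    t * M.star x = t * M.star (t * M.star x) := by
  have hsb : M.star (t * M.star x) = M.star t * M.star x :=
    star_mul_star M t (M.star_mem x)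
  rw [hsb, ← mul_assoc, mul_star]

lemma key_backward_stb (hRR : RightRestriction M) {s t x : S} (hx : x = (s * t) * M.star x) :
    M.star s * (t * M.star x) = t * M.star x := by
  have h5 : M.star s * t = t * M.star (M.star s * t) := hRR (M.star s) (M.star_mem s) t
  have h6 : M.star (M.star s * t) = M.star (s * t) := (M.star_congr s t).symm
  have h7 : M.star x = M.star (s * t) * M.star x := star_absorb M hx
  calc M.star s * (t * M.star x) = (M.star s * t) * M.star x := (mul_assoc _ _ _).symm
    _ = (t * M.star (s * t)) * M.star x := by rw [h5, h6]
    _ = t * (M.star (s * t) * M.star x) := mul_assoc _ _ _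
    _ = t * M.star x := by rw [← h7]

lemma key_backward_plus (hRR : RightRestriction M) {s t x : S} (hx : x = (s * t) * M.star x) :
    M.star s * M.plus (t * M.star x) = M.plus (t * M.star x) :=
  (M.plus_rt (t * M.star x) (M.star s) (M.star_mem s)).mp (key_backward_stb M hRR hx)

lemma key_backward_star_a (hRR : RightRestriction M) {s t x : S} (hx : x = (s * t) * M.star x) :
    M.star (s * M.plus (t * M.star x)) = M.plus (t * M.star x) := by
  rw [star_mul_star M s (M.plus_mem _)]
  exact key_backward_plus M hRR hx

lemma key_backward_a (hRR : RightRestriction M) {s t x : S} (hx : x = (s * t) * M.star x) :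
    s * M.plus (t * M.star x) = s * M.star (s * M.plus (t * M.star x)) := by
  rw [key_backward_star_a M hRR hx]

lemma key_backward_ab {s t x : S} (hx : x = (s * t) * M.star x) :
    (s * M.plus (t * M.star x)) * (t * M.star x) = x := by
  calc (s * M.plus (t * M.star x)) * (t * M.star x)
      = s * (M.plus (t * M.star x) * (t * M.star x)) := mul_assoc _ _ _
    _ = s * (t * M.star x) := by rw [plus_mul]
    _ = (s * t) * M.star x := (mul_assoc _ _ _).symm
    _ = x := hx.symm

end KeyBijection

end SemigroupLemmas


section FinsuppLemmas

variable {S : Type*} [Semigroup S] {k : Type*} [CommRing k]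

lemma conv_single (s t : S) (a b : k) :
    convMul (Finsupp.single s a) (Finsupp.single t b) = Finsupp.single (s * t) (a * b) := by
  unfold convMul
  rw [Finsupp.sum_single_index, Finsupp.sum_single_index]
  · simp
  · rw [Finsupp.sum_single_index] <;> simp

lemma conv_zero_left (y : S →₀ k) : convMul 0 y = 0 := Finsupp.sum_zero_index

lemma conv_zero_right (x : S →₀ k) : convMul x 0 = 0 := by
  unfold convMul
  simp [Finsupp.sum_zero_index]

lemma conv_add_left (x x' y : S →₀ k) :
    convMul (x + x') y = convMul x y + convMul x' y := by
  unfold convMul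
  apply Finsupp.sum_add_index'
  · intro s; simp
  · intro s a a'
    rw [← Finsupp.sum_add]
    congr 1; ext t b
    rw [add_mul, Finsupp.single_add]

lemma conv_add_right (x y y' : S →₀ k) :
    convMul x (y + y') = convMul x y + convMul x y' := by
  unfold convMul
  rw [← Finsupp.sum_add]
  refine Finsupp.sum_congr fun s _ => ?_
  apply Finsupp.sum_add_index'
  · intro t; simp
  · intro t b b'
    rw [mul_add, Finsupp.single_add]

variable [DecidableEq S] {E : Set S} (M : Ehresmann S E)

lemma cat_single (s t : S) (a b : k) :
    catMul M (Finsupp.single s a) (Finsupp.single t b) =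
      if M.star s = M.plus t then Finsupp.single (s * t) (a * b) else 0 := by
  unfold catMul
  rw [Finsupp.sum_single_index, Finsupp.sum_single_index]
  · simp
  · rw [Finsupp.sum_single_index] <;> simp

lemma cat_zero_left (y : S →₀ k) : catMul M 0 y = 0 := Finsupp.sum_zero_index

lemma cat_zero_right (x : S →₀ k) : catMul M x 0 = 0 := by
  unfold catMul
  simp [Finsupp.sum_zero_index]

lemma cat_add_left (x x' y : S →₀ k) :
    catMul M (x + x') y = catMul M x y + catMul M x' y := by
  unfold catMul
  apply Finsupp.sum_add_index'
  · intro s; simp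
  · intro s a a'
    rw [← Finsupp.sum_add]
    congr 1; ext t b
    split_ifs <;> simp [add_mul, Finsupp.single_add]

lemma cat_add_right (x y y' : S →₀ k) :
    catMul M x (y + y') = catMul M x y + catMul M x y' := by
  unfold catMul
  rw [← Finsupp.sum_add]
  refine Finsupp.sum_congr fun s _ => ?_
  apply Finsupp.sum_add_index'
  · intro t; simp
  · intro t b b'
    split_ifs <;> simp [mul_add, Finsupp.single_add]

lemma cat_sum_left {ι : Type*} (A : Finset ι) (f : ι → (S →₀ k)) (y : S →₀ k) :
    catMul M (∑ i ∈ A, f i) y = ∑ i ∈ A, catMul M (f i) y := by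
  classical
  induction A using Finset.induction_on with
  | empty => simp [cat_zero_left]
  | insert _ _ h ih => rw [Finset.sum_insert h, Finset.sum_insert h, cat_add_left, ih]

lemma cat_sum_right {ι : Type*} (A : Finset ι) (f : ι → (S →₀ k)) (x : S →₀ k) :
    catMul M x (∑ i ∈ A, f i) = ∑ i ∈ A, catMul M x (f i) := by
  classical
  induction A using Finset.induction_on with
  | empty => simp [cat_zero_right]
  | insert _ _ h ih => rw [Finset.sum_insert h, Finset.sum_insert h, cat_add_right, ih]

variable [Fintype S]

lemma phi_single (s : S) (a : k) :
    phiMap M (Finsupp.single s a) =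
      ∑ t ∈ Finset.univ.filter (fun t : S => t = s * M.star t), Finsupp.single t a := by
  unfold phiMap
  rw [Finsupp.sum_single_index]
  simp

lemma phi_zero : phiMap M (0 : S →₀ k) = 0 := Finsupp.sum_zero_index

lemma phi_add (x y : S →₀ k) : phiMap M (x + y) = phiMap M x + phiMap M y := by
  unfold phiMap
  apply Finsupp.sum_add_index'
  · intro s; simp
  · intro s a a'
    rw [← Finset.sum_add_distrib]
    congr 1; ext t
    rw [Finsupp.single_add]

lemma phi_smul (c : k) (x : S →₀ k) : phiMap M (c • x) = c • phiMap M x := by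
  unfold phiMap
  rw [Finsupp.sum_smul_index, Finsupp.smul_sum]
  · exact Finsupp.sum_congr fun s _ => by
      simp [Finset.smul_sum, Finsupp.smul_single, smul_eq_mul]
  · intro s; simp

/-- `phiMap` as a linear map. -/
noncomputable def phiLin (M : Ehresmann S E) : (S →₀ k) →ₗ[k] (S →₀ k) where
  toFun := phiMap M
  map_add' := phi_add M
  map_smul' := phi_smul M

end FinsuppLemmas


section Bijective

variable {S : Type*} [Semigroup S] [Fintype S] [DecidableEq S] {E : Set S}
  {k : Type*} [CommRing k]

/-- Number of elements strictly below `s` in the left order. -/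
noncomputable def msr (M : Ehresmann S E) (s : S) : ℕ :=
  (Finset.univ.filter (fun u : S => u = s * M.star u ∧ u ≠ s)).card

lemma msr_lt (M : Ehresmann S E) {u s : S} (hus : u = s * M.star u) (hne : u ≠ s) :
    msr M u < msr M s := by
  apply Finset.card_lt_card
  have hsub : Finset.univ.filter (fun v : S => v = u * M.star v ∧ v ≠ u) ⊆
      Finset.univ.filter (fun v : S => v = s * M.star v ∧ v ≠ s) := by
    intro v hv
    simp only [Finset.mem_filter, Finset.mem_univ, true_and] at hv ⊢
    obtain ⟨hvu, hvne⟩ := hv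
    refine ⟨leL_trans M hvu hus, fun hvs => ?_⟩
    subst hvs
    exact hne (leL_antisymm M hus hvu)
  refine (Finset.ssubset_iff_of_subset hsub).mpr ⟨u, ?_, ?_⟩
  · simp only [Finset.mem_filter, Finset.mem_univ, true_and]
    exact ⟨hus, hne⟩
  · simp

lemma single_mem_range (M : Ehresmann S E) (s : S) :
    Finsupp.single s (1 : k) ∈ LinearMap.range (phiLin (k := k) M) := by
  have key : ∀ n (s : S), msr M s < n →
      Finsupp.single s (1 : k) ∈ LinearMap.range (phiLin (k := k) M) := by
    intro n
    induction n with
    | zero => intro s h; omega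
    | succ n ih =>
      intro s hsn
      have hs : s ∈ Finset.univ.filter (fun t : S => t = s * M.star t) := by
        simp only [Finset.mem_filter, Finset.mem_univ, true_and]
        exact (mul_star M s).symm
      have heq : Finsupp.single s (1 : k) =
          phiLin (k := k) M (Finsupp.single s (1 : k)) -
          ∑ u ∈ (Finset.univ.filter (fun t : S => t = s * M.star t)).erase s,
            Finsupp.single u (1 : k) := by
        have h2 : phiLin (k := k) M (Finsupp.single s (1 : k)) =
            ∑ t ∈ Finset.univ.filter (fun t : S => t = s * M.star t),
              Finsupp.single t (1 : k) := phi_single M s 1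
        rw [h2, ← Finset.add_sum_erase _ _ hs, add_sub_cancel_right]
      rw [heq]
      apply sub_mem
      · exact ⟨_, rfl⟩
      · apply Submodule.sum_mem
        intro u hu
        obtain ⟨hne, hu2⟩ := Finset.mem_erase.mp hu
        simp only [Finset.mem_filter, Finset.mem_univ, true_and] at hu2
        exact ih u (by have := msr_lt M hu2 hne; omega)
  exact key (msr M s + 1) s (Nat.lt_succ_self _)

lemma phi_surj (M : Ehresmann S E) :
    Function.Surjective (phiLin (k := k) M) := by
  intro y
  choose g hg using fun s => single_mem_range (k := k) M s
  refine ⟨∑ s ∈ y.support, y s • g s, ?_⟩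
  rw [map_sum]
  simp_rw [map_smul, hg, Finsupp.smul_single, smul_eq_mul, mul_one]
  exact Finsupp.sum_single y

lemma phi_bij (M : Ehresmann S E) :
    Function.Bijective (phiLin (k := k) M) :=
  ⟨OrzechProperty.injective_of_surjective_endomorphism _ (phi_surj M), phi_surj M⟩

end Bijective


section Mult

variable {S : Type*} [Semigroup S] [Fintype S] [DecidableEq S] {E : Set S}
  {k : Type*} [CommRing k]

lemma phi_mul_single (M : Ehresmann S E) (hRR : RightRestriction M) (s t : S) (a b : k) :
    phiMap M (convMul (Finsupp.single s a) (Finsupp.single t b)) =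
      catMul M (phiMap M (Finsupp.single s a)) (phiMap M (Finsupp.single t b)) := by
  rw [conv_single, phi_single, phi_single, phi_single, cat_sum_left]
  simp_rw [cat_sum_right, cat_single]
  rw [← Finset.sum_product', ← Finset.sum_filter]
  refine Finset.sum_bij'
    (fun x _ => (s * M.plus (t * M.star x), t * M.star x))
    (fun p _ => p.1 * p.2) ?_ ?_ ?_ ?_ ?_
  · intro x hx
    simp only [Finset.mem_filter, Finset.mem_univ, true_and] at hx
    simp only [Finset.mem_filter, Finset.mem_product, Finset.mem_univ, true_and]
    exact ⟨⟨key_backward_a M hRR hx, key_backward_b M hx⟩, key_backward_star_a M hRR hx⟩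
  · intro p hp
    simp only [Finset.mem_filter, Finset.mem_product, Finset.mem_univ, true_and] at hp
    obtain ⟨⟨hp1, hp2⟩, hp3⟩ := hp
    simp only [Finset.mem_filter, Finset.mem_univ, true_and]
    exact key_forward M hp1 hp2 hp3
  · intro x hx
    simp only [Finset.mem_filter, Finset.mem_univ, true_and] at hx
    exact key_backward_ab M hx
  · intro p hp
    simp only [Finset.mem_filter, Finset.mem_product, Finset.mem_univ, true_and] at hp
    obtain ⟨⟨hp1, hp2⟩, hp3⟩ := hp
    have hst : M.star (p.1 * p.2) = M.star p.2 := star_mul_eq_star M hp3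
    have h2 : t * M.star (p.1 * p.2) = p.2 := by rw [hst, ← hp2]
    refine Prod.ext ?_ h2
    show s * M.plus (t * M.star (p.1 * p.2)) = p.1
    rw [h2, ← hp3, ← hp1]
  · intro x hx
    simp only [Finset.mem_filter, Finset.mem_univ, true_and] at hx
    rw [key_backward_ab M hx]

lemma phi_mul (M : Ehresmann S E) (hRR : RightRestriction M) (x y : S →₀ k) :
    phiMap M (convMul x y) = catMul M (phiMap M x) (phiMap M y) := by
  induction x using Finsupp.induction_linear with
  | zero => rw [conv_zero_left, phi_zero, cat_zero_left]
  | add f g hf hg => rw [conv_add_left, phi_add, phi_add, cat_add_left, hf, hg]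
  | single s a =>
    induction y using Finsupp.induction_linear with
    | zero => rw [conv_zero_right, phi_zero, cat_zero_right]
    | add f g hf hg => rw [conv_add_right, phi_add, phi_add, cat_add_right, hf, hg]
    | single t b => exact phi_mul_single M hRR s t a b

end Mult

end Stmt18Aux

/-- For a finite right restriction `E`-Ehresmann semigroup `S` and a
commutative ring `k`, the `k`-linear map `φ(s) = Σ_{t ≤ₗ s} t` is bijective and takes
the convolution product to the category product; hence the semigroup algebra and the
category algebra are isomorphic as (not necessarily unital) `k`-algebras. -/
theorem stmt18 {k : Type*} [CommRing k] {S : Type*} [Semigroup S] [Fintype S]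
    [DecidableEq S] (E : Set S) (M : Ehresmann S E) (hRR : RightRestriction M) :
    Function.Bijective (fun x : S →₀ k => phiMap M x) ∧
    (∀ x y : S →₀ k, phiMap M (x + y) = phiMap M x + phiMap M y) ∧
    (∀ (c : k) (x : S →₀ k), phiMap M (c • x) = c • phiMap M x) ∧
    (∀ x y : S →₀ k, phiMap M (convMul x y) = catMul M (phiMap M x) (phiMap M y)) := by
  exact ⟨Stmt18Aux.phi_bij M, Stmt18Aux.phi_add M, Stmt18Aux.phi_smul M,
    Stmt18Aux.phi_mul M hRR⟩
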